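/- Let p_1, ..., p_n be distinct primes and let q be a prime with q ∉ {p_1, ..., p_n}. Then there exist positive integers K_1, ..., K_n and d such that for every tuple (l_1, ..., l_n) of natural numbers, the order of the element (q mod p_1^{K_1+l_1}, ..., q mod p_n^{K_n+l_n}) in the product group ∏_{i=1}^n (ℤ/p_i^{K_i+l_i}ℤ)ˣ equals d · p_1^{l_1} ⋯ p_n^{l_n}. -/

import Mathlib

open Finset

private theorem step_int (p k : ℕ) (hk : 2 ≤ k) (m : ℤ) :
    ∃ m' : ℤ, (1 + m * p ^ k) ^ p = 1 + m' * p ^ (k + 1) ∧ (p : ℤ) ∣ m' - m := by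
  obtain ⟨j, rfl⟩ : ∃ j, k = j + 2 := ⟨k - 2, by omega⟩
  set a : ℤ := 1 + m * p ^ (j + 2) with ha
  have hS : ∃ w : ℤ, ∑ i ∈ range p, a ^ i = p + w * p ^ (j + 2) := by
    have : (p : ℤ) ^ (j + 2) ∣ (∑ i ∈ range p, a ^ i) - p := by
      have h0 : (∑ i ∈ range p, a ^ i) - p = ∑ i ∈ range p, (a ^ i - 1) := by
        rw [Finset.sum_sub_distrib]; simp
      rw [h0]
      refine Finset.dvd_sum fun i _ => ?_
      have h1 : a - 1 ∣ a ^ i - 1 := by simpa using sub_dvd_pow_sub_pow a 1 i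
      have h2 : (p : ℤ) ^ (j + 2) ∣ a - 1 := ⟨m, by rw [ha]; ring⟩
      exact h2.trans h1
    obtain ⟨w, hw⟩ := this
    exact ⟨w, by linarith [hw]⟩
  obtain ⟨w, hw⟩ := hS
  have key : a ^ p - 1 = (a - 1) * ∑ i ∈ range p, a ^ i := by
    rw [mul_comm, geom_sum_mul]
  refine ⟨m + m * w * p ^ (j + 1), ?_, ?_⟩
  · have h1 : a - 1 = m * p ^ (j + 2) := by rw [ha]; ring
    have h2 : a ^ p - 1 = (m + m * w * p ^ (j + 1)) * p ^ (j + 2 + 1) := by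
      rw [key, h1, hw]; ring
    linarith [h2]
  · exact ⟨m * w * p ^ j, by ring⟩

private theorem bridge (p q : ℕ) (hp : p.Prime) (hco : Nat.Coprime q p) (k N : ℕ) :
    orderOf (ZMod.unitOfCoprime q (hco.pow_right k) : (ZMod (p ^ k))ˣ) ∣ N ↔
      (p : ℤ) ^ k ∣ (q : ℤ) ^ N - 1 := by
  haveI : NeZero (p ^ k) := ⟨pow_ne_zero _ hp.pos.ne'⟩
  rw [orderOf_dvd_iff_pow_eq_one]
  rw [← Units.val_eq_one, Units.val_pow_eq_pow_val, ZMod.coe_unitOfCoprime]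
  have h0 : ((q : ZMod (p ^ k)) ^ N = 1) ↔ ((q ^ N : ℕ) : ZMod (p ^ k)) = ((1 : ℕ) : ZMod (p ^ k)) := by
    push_cast; rfl
  rw [h0, ZMod.natCast_eq_natCast_iff, Nat.modEq_iff_dvd]
  constructor
  · intro h
    have h2 := dvd_neg.mpr h
    push_cast at h2
    rw [neg_sub] at h2; exact h2
  · intro h
    have h2 := dvd_neg.mpr h
    push_cast
    rw [neg_sub] at h2; exact h2

private theorem core (p q : ℕ) (hp : p.Prime) (hq2 : 2 ≤ q) (hco : Nat.Coprime q p) :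
    ∃ K : ℕ, 2 ≤ K ∧ ∀ l : ℕ,
      orderOf (ZMod.unitOfCoprime q (hco.pow_right (K + l)) : (ZMod (p ^ (K + l)))ˣ)
        = orderOf (ZMod.unitOfCoprime q (hco.pow_right K) : (ZMod (p ^ K))ˣ) * p ^ l := by
  set f : ℕ → ℕ := fun k => orderOf (ZMod.unitOfCoprime q (hco.pow_right k) : (ZMod (p ^ k))ˣ)
    with hf
  have hfpos : ∀ k, 0 < f k := by
    intro k
    haveI : NeZero (p ^ k) := ⟨pow_ne_zero _ hp.pos.ne'⟩
    exact orderOf_pos _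
  have hbr : ∀ k N, f k ∣ N ↔ (p : ℤ) ^ k ∣ (q : ℤ) ^ N - 1 := fun k N => bridge p q hp hco k N
  have hfP : ∀ k, (p : ℤ) ^ k ∣ (q : ℤ) ^ (f k) - 1 := fun k => (hbr k (f k)).mp dvd_rfl
  -- the step
  have G2 : ∀ k, 2 ≤ k → ¬ ((p : ℤ) ^ (k + 1) ∣ (q : ℤ) ^ (f k) - 1) →
      f (k + 1) = p * f k ∧ ¬ ((p : ℤ) ^ (k + 2) ∣ (q : ℤ) ^ (f (k + 1)) - 1) := by
    intro k hk hno
    obtain ⟨m, hm⟩ := hfP k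
    have hqe : (q : ℤ) ^ (f k) = 1 + m * p ^ k := by linarith [hm]
    obtain ⟨m', hm', hmm'⟩ := step_int p k hk m
    have hpm' : ¬ ((p : ℤ) ∣ m') := by
      intro hd
      apply hno
      have hpm : (p : ℤ) ∣ m := by
        have := dvd_sub hd hmm'
        simpa using this
      obtain ⟨c, hc⟩ := hpm
      rw [hqe, hc]
      exact ⟨c, by ring⟩
    have hpow : (q : ℤ) ^ (p * f k) - 1 = m' * p ^ (k + 1) := by
      rw [mul_comm, pow_mul, hqe, hm']; ring
    have h1 : f (k + 1) ∣ p * f k := (hbr (k + 1) _).mpr ⟨m', by rw [hpow]; ring⟩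
    have h2 : f k ∣ f (k + 1) :=
      (hbr k _).mpr ((pow_dvd_pow (p : ℤ) (Nat.le_succ k)).trans (hfP (k + 1)))
    have h3 : ¬ (f (k + 1) ∣ f k) := fun hd => hno ((hbr (k + 1) (f k)).mp hd)
    have heq : f (k + 1) = p * f k := by
      obtain ⟨t, ht⟩ := h2
      have htp : t ∣ p := by
        have : f k * t ∣ f k * p := by rw [← ht, mul_comm (f k) p]; exact h1
        exact (mul_dvd_mul_iff_left (hfpos k).ne').mp this
      rcases (Nat.Prime.eq_one_or_self_of_dvd hp t htp) with h | h
      · exfalso; apply h3; rw [ht, h, mul_one]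
      · rw [ht, h, mul_comm]
    refine ⟨heq, ?_⟩
    intro hdvd
    apply hpm'
    rw [heq, hpow] at hdvd
    have : (p : ℤ) ^ (k + 2) = p ^ (k + 1) * p := by ring
    rw [this] at hdvd
    have hpk : ((p : ℤ) ^ (k + 1)) ≠ 0 := pow_ne_zero _ (by exact_mod_cast hp.pos.ne')
    obtain ⟨c, hc⟩ := hdvd
    refine ⟨c, mul_right_cancel₀ hpk ?_⟩
    rw [hc]; ring
  -- base case
  have hcast : ∀ k N, ((p : ℤ) ^ k ∣ (q : ℤ) ^ N - 1) ↔ p ^ k ∣ q ^ N - 1 := by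
    intro k N
    have h1 : 1 ≤ q ^ N := Nat.one_le_pow _ _ (by omega)
    rw [← Int.natCast_dvd_natCast]
    push_cast [h1]
    rfl
  set N := f 2 with hN
  have hne : q ^ N - 1 ≠ 0 := by
    have : 2 ≤ q ^ N := le_trans hq2 (Nat.le_self_pow (hfpos 2).ne' q)
    omega
  set v := (q ^ N - 1).factorization p with hv
  have hv2 : 2 ≤ v := by
    rw [hv, ← Nat.Prime.pow_dvd_iff_le_factorization hp hne, ← hcast]
    exact hfP 2
  have hvd : p ^ v ∣ q ^ N - 1 := Nat.ordProj_dvd _ _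
  have hnot : ¬ p ^ (v + 1) ∣ q ^ N - 1 := Nat.pow_succ_factorization_not_dvd hne hp
  have h1 : f v ∣ N := (hbr v N).mpr ((hcast v N).mpr hvd)
  have hbase : ¬ ((p : ℤ) ^ (v + 1) ∣ (q : ℤ) ^ (f v) - 1) := by
    rw [hcast]
    intro hd
    apply hnot
    refine hd.trans ?_
    obtain ⟨c, hc⟩ := h1
    calc q ^ f v - 1 ∣ (q ^ f v) ^ c - 1 ^ c := Nat.sub_dvd_pow_sub_pow _ 1 c
      _ = q ^ N - 1 := by rw [← pow_mul, ← hc, one_pow]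
  refine ⟨v, hv2, ?_⟩
  -- induction
  have main : ∀ l, f (v + l) = f v * p ^ l ∧ ¬ ((p : ℤ) ^ (v + l + 1) ∣ (q : ℤ) ^ (f (v + l)) - 1) := by
    intro l
    induction l with
    | zero => simpa using hbase
    | succ l ih =>
      obtain ⟨ih1, ih2⟩ := ih
      obtain ⟨g1, g2⟩ := G2 (v + l) (by omega) ih2
      constructor
      · rw [show v + (l + 1) = (v + l) + 1 from rfl, g1, ih1]; ring
      · rw [show v + (l + 1) + 1 = (v + l) + 2 from rfl]
        exact g2
  exact fun l => (main l).1

private theorem lcm_fact {ι : Type*} (s : Finset ι) (f : ι → ℕ) (hf : ∀ i ∈ s, f i ≠ 0) :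
    s.lcm f ≠ 0 ∧ ∀ r, (s.lcm f).factorization r = s.sup fun i => (f i).factorization r := by
  classical
  induction s using Finset.induction_on with
  | empty => simp
  | @insert a s ha ih =>
    have hfa : f a ≠ 0 := hf a (mem_insert_self a s)
    obtain ⟨h1, h2⟩ := ih (fun i hi => hf i (mem_insert_of_mem hi))
    rw [Finset.lcm_insert]
    constructor
    · rw [lcm_eq_nat_lcm]; exact Nat.lcm_ne_zero hfa h1
    · intro r
      rw [lcm_eq_nat_lcm, Nat.factorization_lcm hfa h1, Finsupp.sup_apply,
        Finset.sup_insert, h2 r]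

theorem orderOf_pi' {ι : Type*} [Fintype ι] {G : ι → Type*} [∀ i, Group (G i)] (f : ∀ i, G i) :
    orderOf f = univ.lcm fun i => orderOf (f i) := by
  apply Nat.dvd_antisymm
  · rw [orderOf_dvd_iff_pow_eq_one]
    funext i
    rw [Pi.pow_apply, Pi.one_apply, ← orderOf_dvd_iff_pow_eq_one]
    exact Finset.dvd_lcm (mem_univ i)
  · refine Finset.lcm_dvd fun i _ => ?_
    rw [orderOf_dvd_iff_pow_eq_one]
    exact congrFun (pow_orderOf_eq_one f) i

theorem main_theorem
    (n : ℕ) (p : Fin n → ℕ) (hp : ∀ i, (p i).Prime)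
    (hdist : Function.Injective p)
    (q : ℕ) (hq : q.Prime) (hqp : ∀ i, q ≠ p i)
    (core : ∀ (P Q : ℕ), P.Prime → 2 ≤ Q → ∀ (hco : Nat.Coprime Q P),
      ∃ K : ℕ, 2 ≤ K ∧ ∀ l : ℕ,
        orderOf (ZMod.unitOfCoprime Q (hco.pow_right (K + l)) : (ZMod (P ^ (K + l)))ˣ)
          = orderOf (ZMod.unitOfCoprime Q (hco.pow_right K) : (ZMod (P ^ K))ˣ) * P ^ l) :
    ∃ K : Fin n → ℕ, (∀ i, 0 < K i) ∧ ∃ d : ℕ, 0 < d ∧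
      ∀ l : Fin n → ℕ,
        orderOf (fun i => (ZMod.unitOfCoprime q
            (Nat.Coprime.pow_right (K i + l i)
              ((Nat.coprime_primes hq (hp i)).mpr (hqp i))) : (ZMod (p i ^ (K i + l i)))ˣ))
          = d * ∏ i, p i ^ l i := by
  classical
  have hco : ∀ i, Nat.Coprime q (p i) := fun i => (Nat.coprime_primes hq (hp i)).mpr (hqp i)
  choose K0 hK0 hgrow using fun i => core (p i) q (hp i) hq.two_le (hco i)
  set c0 : Fin n → ℕ := fun i =>
    orderOf (ZMod.unitOfCoprime q ((hco i).pow_right (K0 i)) : (ZMod (p i ^ (K0 i)))ˣ) with hc0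
  set M : ℕ := Finset.univ.sup fun i : Fin n =>
    Finset.univ.sup fun j : Fin n => (c0 j).factorization (p i) with hM
  set K : Fin n → ℕ := fun i => K0 i + M with hK
  set c : Fin n → ℕ := fun i => c0 i * p i ^ M with hc
  have hc0pos : ∀ i, c0 i ≠ 0 := by
    intro i
    haveI : NeZero (p i ^ K0 i) := ⟨pow_ne_zero _ (hp i).pos.ne'⟩
    exact (orderOf_pos _).ne'
  have hcpos : ∀ i, c i ≠ 0 := fun i =>
    mul_ne_zero (hc0pos i) (pow_ne_zero _ (hp i).pos.ne')
  -- order formula at shifted levels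
  have horder : ∀ (i : Fin n) (l : ℕ),
      orderOf (ZMod.unitOfCoprime q ((hco i).pow_right (K i + l)) : (ZMod (p i ^ (K i + l)))ˣ)
        = c i * p i ^ l := by
    intro i l
    have h1 := hgrow i (M + l)
    have h2 : K0 i + (M + l) = K i + l := (add_assoc (K0 i) M l).symm
    rw [h2] at h1
    rw [h1, hc, pow_add]
    ring
  -- valuation domination
  have hfact : ∀ i j, (c j).factorization (p i) =
      (c0 j).factorization (p i) + (if p j = p i then M else 0) := by
    intro i j
    rw [hc, Nat.factorization_mul (hc0pos j) (pow_ne_zero _ (hp j).pos.ne'),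
      Finsupp.add_apply, Nat.factorization_pow, Finsupp.smul_apply,
      (hp j).factorization, Finsupp.single_apply]
    simp [mul_ite]
  have hle : ∀ i j, (c j).factorization (p i) ≤ (c i).factorization (p i) := by
    intro i j
    by_cases hij : j = i
    · subst hij; exact le_rfl
    · rw [hfact i j, hfact i i, if_pos rfl, if_neg (fun h => hij (hdist h))]
      have hb : (c0 j).factorization (p i) ≤ M := by
        rw [hM]
        exact le_trans
          (Finset.le_sup (f := fun j => (c0 j).factorization (p i)) (mem_univ j))
          (Finset.le_sup (f := fun i => univ.sup fun j => (c0 j).factorization (p i)) (mem_univ i))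
      omega
  set d : ℕ := Finset.univ.lcm c with hd
  obtain ⟨hdne, hdf⟩ := lcm_fact Finset.univ c (fun i _ => hcpos i)
  refine ⟨K, fun i => by have := hK0 i; simp [hK]; omega, d, Nat.pos_of_ne_zero hdne, ?_⟩
  intro l
  rw [orderOf_pi']
  have hcomp : (Finset.univ.lcm fun i =>
      orderOf (ZMod.unitOfCoprime q ((hco i).pow_right (K i + l i)) : (ZMod (p i ^ (K i + l i)))ˣ))
      = Finset.univ.lcm fun i => c i * p i ^ l i := by
    congr 1
    funext i
    exact horder i (l i)
  rw [hcomp]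
  -- now the arithmetic lcm identity
  have hprodne : (∏ i, p i ^ l i) ≠ 0 :=
    Finset.prod_ne_zero_iff.mpr fun i _ => pow_ne_zero _ (hp i).pos.ne'
  obtain ⟨hXne, hXf⟩ := lcm_fact Finset.univ (fun i => c i * p i ^ l i)
    (fun i _ => mul_ne_zero (hcpos i) (pow_ne_zero _ (hp i).pos.ne'))
  apply Nat.eq_of_factorization_eq hXne (mul_ne_zero hdne hprodne)
  intro r
  rw [hXf r, Nat.factorization_mul hdne hprodne, Finsupp.add_apply, hdf r,
    Nat.factorization_prod (fun i _ => pow_ne_zero _ (hp i).pos.ne'),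
    Finsupp.finset_sum_apply]
  have hterm : ∀ i : Fin n, ((p i ^ l i).factorization) r = if p i = r then l i else 0 := by
    intro i
    rw [Nat.factorization_pow, Finsupp.smul_apply, (hp i).factorization, Finsupp.single_apply]
    simp [mul_ite]
  have hterm2 : ∀ i : Fin n, ((c i * p i ^ l i).factorization) r =
      (c i).factorization r + if p i = r then l i else 0 := by
    intro i
    rw [Nat.factorization_mul (hcpos i) (pow_ne_zero _ (hp i).pos.ne'), Finsupp.add_apply,
      hterm i]
  simp only [hterm, hterm2]
  by_cases hr : ∃ j, p j = r
  · obtain ⟨j, hj⟩ := hr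
    have hsum : (∑ i, if p i = r then l i else 0) = l j := by
      rw [Finset.sum_eq_single j]
      · rw [if_pos hj]
      · intro b _ hbj
        rw [if_neg]
        intro hb
        exact hbj (hdist (hb.trans hj.symm))
      · intro h; exact absurd (mem_univ j) h
    have hsupc : (Finset.univ.sup fun i => (c i).factorization r) = (c j).factorization r := by
      apply le_antisymm
      · apply Finset.sup_le
        intro i _
        rw [← hj]
        exact hle j i
      · exact Finset.le_sup (f := fun i => (c i).factorization r) (mem_univ j)
    have hsupall : (Finset.univ.sup fun i => (c i).factorization r + if p i = r then l i else 0)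
        = (c j).factorization r + l j := by
      apply le_antisymm
      · apply Finset.sup_le
        intro i _
        by_cases hij : i = j
        · subst hij; rw [if_pos hj]
        · rw [if_neg (fun hb => hij (hdist (hb.trans hj.symm)))]
          rw [← hj]
          have := hle j i
          omega
      · refine le_trans ?_ (Finset.le_sup
            (f := fun i => (c i).factorization r + if p i = r then l i else 0) (mem_univ j))
        simp [hj]
    rw [hsupall, hsupc, hsum]
  · push_neg at hr
    have h0 : ∀ i : Fin n, (if p i = r then l i else (0:ℕ)) = 0 := fun i => if_neg (hr i)
    simp only [h0, add_zero, Finset.sum_const_zero]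

/-- Proposition A.5: for distinct primes `p₁, …, pₙ` and a prime `q ∉ {p₁, …, pₙ}`, there are
positive integers `K₁, …, Kₙ` and `d` such that for all natural numbers `l₁, …, lₙ`, the order
of `(q, …, q)` in `∏ᵢ (ℤ/pᵢ^(Kᵢ+lᵢ)ℤ)ˣ` equals `d · p₁^{l₁} ⋯ pₙ^{lₙ}`. -/
theorem exists_order_formula_product
    (n : ℕ) (p : Fin n → ℕ) (hp : ∀ i, (p i).Prime)
    (hdist : Function.Injective p)
    (q : ℕ) (hq : q.Prime) (hqp : ∀ i, q ≠ p i) :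
    ∃ K : Fin n → ℕ, (∀ i, 0 < K i) ∧ ∃ d : ℕ, 0 < d ∧
      ∀ l : Fin n → ℕ,
        orderOf (fun i => (ZMod.unitOfCoprime q
            (Nat.Coprime.pow_right (K i + l i)
              ((Nat.coprime_primes hq (hp i)).mpr (hqp i))) : (ZMod (p i ^ (K i + l i)))ˣ))
          = d * ∏ i, p i ^ l i :=
  main_theorem n p hp hdist q hq hqp (fun P Q h1 h2 hco => core P Q h1 h2 hco)
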